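/- (Simulation Lemma for occupancy measures) Let π and π' be Markov policies on a finite MDP with discount γ ∈ (0,1), and let M^π, M^π' denote their normalized discounted state-action occupancy measures from initial distribution μ₀. Then ‖M^π - M^π'‖₁ ≤ (1/(1-γ)) · max_{s∈S} ‖π(·|s) - π'(·|s)‖₁. -/

import Mathlib

open scoped BigOperators

/-- Time-t state distribution of a finite MDP under policy π, starting from μ₀. -/
def stateDist {S A : Type*} [Fintype S] [Fintype A]
    (P : S → A → S → ℝ) (π : S → A → ℝ) (μ₀ : S → ℝ) : ℕ → S → ℝ
  | 0 => μ₀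
  | (t + 1) => fun s' => ∑ s, ∑ a, stateDist P π μ₀ t s * π s a * P s a s'

/-- Normalized discounted state-action occupancy measure M^π(s,a). -/
noncomputable def occupancy {S A : Type*} [Fintype S] [Fintype A]
    (P : S → A → S → ℝ) (μ₀ : S → ℝ) (γ : ℝ) (π : S → A → ℝ) (s : S) (a : A) : ℝ :=
  (1 - γ) * ∑' t : ℕ, γ ^ t * stateDist P π μ₀ t s * π s a

lemma stateDist_nonneg {S A : Type*} [Fintype S] [Fintype A]
    (P : S → A → S → ℝ) (hP0 : ∀ s a s', 0 ≤ P s a s')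
    (π : S → A → ℝ) (hπ0 : ∀ s a, 0 ≤ π s a)
    (μ₀ : S → ℝ) (hμ0 : ∀ s, 0 ≤ μ₀ s) :
    ∀ t s, 0 ≤ stateDist P π μ₀ t s := by
  intro t
  induction t with
  | zero => exact hμ0
  | succ t ih =>
    intro s'
    simp only [stateDist]
    exact Finset.sum_nonneg fun s _ => Finset.sum_nonneg fun a _ =>
      mul_nonneg (mul_nonneg (ih s) (hπ0 s a)) (hP0 s a s')

lemma stateDist_sum {S A : Type*} [Fintype S] [Fintype A]
    (P : S → A → S → ℝ) (hP1 : ∀ s a, ∑ s', P s a s' = 1)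
    (π : S → A → ℝ) (hπ1 : ∀ s, ∑ a, π s a = 1)
    (μ₀ : S → ℝ) (hμ1 : ∑ s, μ₀ s = 1) :
    ∀ t, ∑ s, stateDist P π μ₀ t s = 1 := by
  intro t
  induction t with
  | zero => exact hμ1
  | succ t ih =>
    simp only [stateDist]
    rw [Finset.sum_comm]
    calc ∑ s, ∑ s', ∑ a, stateDist P π μ₀ t s * π s a * P s a s'
        = ∑ s, ∑ a, ∑ s', stateDist P π μ₀ t s * π s a * P s a s' := by
          congr 1; ext s; rw [Finset.sum_comm]
      _ = ∑ s, ∑ a, stateDist P π μ₀ t s * π s a := by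
          congr 1; ext s; congr 1; ext a
          rw [← Finset.mul_sum, hP1, mul_one]
      _ = ∑ s, stateDist P π μ₀ t s := by
          congr 1; ext s; rw [← Finset.mul_sum, hπ1, mul_one]
      _ = 1 := ih

theorem simulation_lemma_occupancy
    {S A : Type*} [Fintype S] [Fintype A] [Nonempty S] [Nonempty A]
    (P : S → A → S → ℝ) (hP0 : ∀ s a s', 0 ≤ P s a s') (hP1 : ∀ s a, ∑ s', P s a s' = 1)
    (μ₀ : S → ℝ) (hμ0 : ∀ s, 0 ≤ μ₀ s) (hμ1 : ∑ s, μ₀ s = 1)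
    (γ : ℝ) (hγ0 : 0 < γ) (hγ1 : γ < 1)
    (π π' : S → A → ℝ)
    (hπ0 : ∀ s a, 0 ≤ π s a) (hπ1 : ∀ s, ∑ a, π s a = 1)
    (hπ'0 : ∀ s a, 0 ≤ π' s a) (hπ'1 : ∀ s, ∑ a, π' s a = 1) :
    (∑ s, ∑ a, |occupancy P μ₀ γ π s a - occupancy P μ₀ γ π' s a|)
      ≤ (1 / (1 - γ)) *
        (Finset.univ.sup' Finset.univ_nonempty (fun s => ∑ a, |π s a - π' s a|)) := by
  set ε := Finset.univ.sup' Finset.univ_nonempty (fun s => ∑ a, |π s a - π' s a|) with hεdef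
  set μ := stateDist P π μ₀ with hμdef
  set ν := stateDist P π' μ₀ with hνdef
  have hγs : (0:ℝ) < 1 - γ := by linarith
  have hεs : ∀ s, ∑ a, |π s a - π' s a| ≤ ε := by
    intro s
    rw [hεdef]
    exact Finset.le_sup' (fun s => ∑ a, |π s a - π' s a|) (Finset.mem_univ s)
  have hε0 : 0 ≤ ε := by
    obtain ⟨s⟩ := ‹Nonempty S›
    exact le_trans (Finset.sum_nonneg fun a _ => abs_nonneg _) (hεs s)
  have hμ0' := stateDist_nonneg P hP0 π hπ0 μ₀ hμ0
  have hν0' := stateDist_nonneg P hP0 π' hπ'0 μ₀ hμ0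
  have hμ1' := stateDist_sum P hP1 π hπ1 μ₀ hμ1
  have hν1' := stateDist_sum P hP1 π' hπ'1 μ₀ hμ1
  have hμle1 : ∀ t s, μ t s ≤ 1 := by
    intro t s
    calc μ t s ≤ ∑ s, μ t s :=
      Finset.single_le_sum (fun s _ => hμ0' t s) (Finset.mem_univ s)
    _ = 1 := hμ1' t
  have hνle1 : ∀ t s, ν t s ≤ 1 := by
    intro t s
    calc ν t s ≤ ∑ s, ν t s :=
      Finset.single_le_sum (fun s _ => hν0' t s) (Finset.mem_univ s)
    _ = 1 := hν1' t
  have hπle1 : ∀ s a, π s a ≤ 1 := by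
    intro s a
    calc π s a ≤ ∑ a, π s a := Finset.single_le_sum (fun a _ => hπ0 s a) (Finset.mem_univ a)
    _ = 1 := hπ1 s
  have hπ'le1 : ∀ s a, π' s a ≤ 1 := by
    intro s a
    calc π' s a ≤ ∑ a, π' s a := Finset.single_le_sum (fun a _ => hπ'0 s a) (Finset.mem_univ a)
    _ = 1 := hπ'1 s
  -- per-time total variation of state distributions
  set D : ℕ → ℝ := fun t => ∑ s, |μ t s - ν t s| with hDdef
  -- per-time state-action discrepancy
  set B : ℕ → ℝ := fun t => ∑ s, ∑ a, |μ t s * π s a - ν t s * π' s a| with hBdef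
  have hB : ∀ t, B t ≤ D t + ε := by
    intro t
    have step : ∀ s, ∑ a, |μ t s * π s a - ν t s * π' s a|
        ≤ |μ t s - ν t s| + ν t s * ε := by
      intro s
      calc ∑ a, |μ t s * π s a - ν t s * π' s a|
          ≤ ∑ a, (|μ t s - ν t s| * π s a + ν t s * |π s a - π' s a|) := by
            apply Finset.sum_le_sum
            intro a _
            have : μ t s * π s a - ν t s * π' s a
                = (μ t s - ν t s) * π s a + ν t s * (π s a - π' s a) := by ring
            rw [this]
            refine (abs_add_le _ _).trans ?_
            rw [abs_mul, abs_mul, abs_of_nonneg (hπ0 s a), abs_of_nonneg (hν0' t s)]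
        _ = |μ t s - ν t s| * (∑ a, π s a) + ν t s * ∑ a, |π s a - π' s a| := by
            rw [Finset.sum_add_distrib, ← Finset.mul_sum, ← Finset.mul_sum]
        _ ≤ |μ t s - ν t s| + ν t s * ε := by
            rw [hπ1, mul_one]
            exact add_le_add_right (mul_le_mul_of_nonneg_left (hεs s) (hν0' t s)) _
    calc B t ≤ ∑ s, (|μ t s - ν t s| + ν t s * ε) := Finset.sum_le_sum fun s _ => step s
      _ = D t + (∑ s, ν t s) * ε := by rw [Finset.sum_add_distrib, ← Finset.sum_mul]
      _ = D t + ε := by rw [hν1' t, one_mul]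
  have hrec : ∀ t, D (t + 1) ≤ B t := by
    intro t
    have hdiff : ∀ s', μ (t + 1) s' - ν (t + 1) s'
        = ∑ s, ∑ a, (μ t s * π s a - ν t s * π' s a) * P s a s' := by
      intro s'
      show (stateDist P π μ₀ (t+1) s') - (stateDist P π' μ₀ (t+1) s') = _
      simp only [stateDist, ← Finset.sum_sub_distrib]
      congr 1; ext s; congr 1; ext a; ring
    calc D (t + 1) = ∑ s', |μ (t+1) s' - ν (t+1) s'| := rfl
      _ ≤ ∑ s', ∑ s, ∑ a, |μ t s * π s a - ν t s * π' s a| * P s a s' := by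
          apply Finset.sum_le_sum
          intro s' _
          rw [hdiff s']
          refine (Finset.abs_sum_le_sum_abs _ _).trans ?_
          apply Finset.sum_le_sum
          intro s _
          refine (Finset.abs_sum_le_sum_abs _ _).trans ?_
          apply Finset.sum_le_sum
          intro a _
          rw [abs_mul, abs_of_nonneg (hP0 s a s')]
      _ = ∑ s, ∑ a, |μ t s * π s a - ν t s * π' s a| * ∑ s', P s a s' := by
          rw [Finset.sum_comm]
          congr 1; ext s
          rw [Finset.sum_comm]
          congr 1; ext a
          rw [Finset.mul_sum]
      _ = B t := by
          simp only [hP1, mul_one]; rfl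
  have hD : ∀ t, D t ≤ t * ε := by
    intro t
    induction t with
    | zero => simp [D, hμdef, hνdef, stateDist]
    | succ t ih =>
      calc D (t + 1) ≤ B t := hrec t
        _ ≤ D t + ε := hB t
        _ ≤ t * ε + ε := add_le_add_left ih _
        _ = (t + 1 : ℕ) * ε := by push_cast; ring
  have hBt : ∀ t, B t ≤ (t + 1 : ℝ) * ε := by
    intro t
    calc B t ≤ D t + ε := hB t
      _ ≤ t * ε + ε := add_le_add_left (hD t) _
      _ = (t + 1 : ℝ) * ε := by ring
  have hB0 : ∀ t, 0 ≤ B t :=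
    fun t => Finset.sum_nonneg fun s _ => Finset.sum_nonneg fun a _ => abs_nonneg _
  have hgeom : Summable (fun t : ℕ => γ ^ t) :=
    summable_geometric_of_lt_one hγ0.le hγ1
  have hsum1 : ∀ s a, Summable (fun t => γ ^ t * μ t s * π s a) := by
    intro s a
    apply Summable.of_norm
    apply Summable.of_nonneg_of_le (fun t => norm_nonneg _) _ hgeom
    intro t
    rw [Real.norm_eq_abs, abs_mul, abs_mul, abs_of_nonneg (pow_nonneg hγ0.le t),
      abs_of_nonneg (hμ0' t s), abs_of_nonneg (hπ0 s a)]
    calc γ ^ t * μ t s * π s a ≤ γ ^ t * 1 * 1 := by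
          apply mul_le_mul (mul_le_mul le_rfl (hμle1 t s) (hμ0' t s) (pow_nonneg hγ0.le t))
            (hπle1 s a) (hπ0 s a)
          positivity
      _ = γ ^ t := by ring
  have hsum2 : ∀ s a, Summable (fun t => γ ^ t * ν t s * π' s a) := by
    intro s a
    apply Summable.of_norm
    apply Summable.of_nonneg_of_le (fun t => norm_nonneg _) _ hgeom
    intro t
    rw [Real.norm_eq_abs, abs_mul, abs_mul, abs_of_nonneg (pow_nonneg hγ0.le t),
      abs_of_nonneg (hν0' t s), abs_of_nonneg (hπ'0 s a)]
    calc γ ^ t * ν t s * π' s a ≤ γ ^ t * 1 * 1 := by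
          apply mul_le_mul (mul_le_mul le_rfl (hνle1 t s) (hν0' t s) (pow_nonneg hγ0.le t))
            (hπ'le1 s a) (hπ'0 s a)
          positivity
      _ = γ ^ t := by ring
  -- the absolute summand
  set f : S → A → ℕ → ℝ :=
    fun s a t => |γ ^ t * μ t s * π s a - γ ^ t * ν t s * π' s a| with hfdef
  have hfsum : ∀ s a, Summable (f s a) := fun s a =>
    ((hsum1 s a).sub (hsum2 s a)).abs
  have hpoint : ∀ s a, |occupancy P μ₀ γ π s a - occupancy P μ₀ γ π' s a|
      ≤ (1 - γ) * ∑' t, f s a t := by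
    intro s a
    have : occupancy P μ₀ γ π s a - occupancy P μ₀ γ π' s a
        = (1 - γ) * ∑' t, (γ ^ t * μ t s * π s a - γ ^ t * ν t s * π' s a) := by
      rw [occupancy, occupancy, ← mul_sub, Summable.tsum_sub (hsum1 s a) (hsum2 s a)]
    rw [this, abs_mul, abs_of_nonneg hγs.le]
    apply mul_le_mul_of_nonneg_left _ hγs.le
    calc |∑' t, (γ ^ t * μ t s * π s a - γ ^ t * ν t s * π' s a)|
        = ‖∑' t, (γ ^ t * μ t s * π s a - γ ^ t * ν t s * π' s a)‖ := rfl
      _ ≤ ∑' t, ‖γ ^ t * μ t s * π s a - γ ^ t * ν t s * π' s a‖ :=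
          norm_tsum_le_tsum_norm (by exact (hfsum s a))
      _ = ∑' t, f s a t := rfl
  -- swap sums
  have hswap : (∑' t, ∑ s, ∑ a, f s a t) = ∑ s, ∑ a, ∑' t, f s a t := by
    rw [Summable.tsum_finsetSum (fun s _ => summable_sum fun a _ => hfsum s a)]
    exact Finset.sum_congr rfl fun s _ => Summable.tsum_finsetSum fun a _ => hfsum s a
  have hfB : ∀ t, ∑ s, ∑ a, f s a t = γ ^ t * B t := by
    intro t
    rw [hBdef, Finset.mul_sum]
    refine Finset.sum_congr rfl fun s _ => ?_
    rw [Finset.mul_sum]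
    refine Finset.sum_congr rfl fun a _ => ?_
    simp only [hfdef]
    have : γ ^ t * μ t s * π s a - γ ^ t * ν t s * π' s a
        = γ ^ t * (μ t s * π s a - ν t s * π' s a) := by ring
    rw [this, abs_mul, abs_of_nonneg (pow_nonneg hγ0.le t)]
  have hRsum : Summable (fun t : ℕ => ((t : ℝ) + 1) * γ ^ t * ε) := by
    have h1 : Summable (fun t : ℕ => (t : ℝ) * γ ^ t) := by
      have := summable_pow_mul_geometric_of_norm_lt_one 1
        (r := γ) (by rw [Real.norm_eq_abs, abs_of_pos hγ0]; exact hγ1)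
      simpa using this
    have := ((h1.add hgeom).mul_right ε)
    apply this.congr
    intro t
    ring
  have hLsum : Summable (fun t : ℕ => γ ^ t * B t) := by
    apply Summable.of_nonneg_of_le (fun t => mul_nonneg (pow_nonneg hγ0.le t) (hB0 t)) _ hRsum
    intro t
    calc γ ^ t * B t ≤ γ ^ t * ((t + 1 : ℝ) * ε) :=
        mul_le_mul_of_nonneg_left (hBt t) (pow_nonneg hγ0.le t)
      _ = ((t : ℝ) + 1) * γ ^ t * ε := by ring
  have htsum_le : (∑' t, γ ^ t * B t) ≤ ∑' t : ℕ, ((t : ℝ) + 1) * γ ^ t * ε := by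
    apply Summable.tsum_le_tsum _ hLsum hRsum
    intro t
    calc γ ^ t * B t ≤ γ ^ t * ((t + 1 : ℝ) * ε) :=
        mul_le_mul_of_nonneg_left (hBt t) (pow_nonneg hγ0.le t)
      _ = ((t : ℝ) + 1) * γ ^ t * ε := by ring
  have hRval : (∑' t : ℕ, ((t : ℝ) + 1) * γ ^ t * ε)
      = (γ / (1 - γ) ^ 2 + (1 - γ)⁻¹) * ε := by
    have h1 : Summable (fun t : ℕ => (t : ℝ) * γ ^ t) := by
      have := summable_pow_mul_geometric_of_norm_lt_one 1
        (r := γ) (by rw [Real.norm_eq_abs, abs_of_pos hγ0]; exact hγ1)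
      simpa using this
    have heq : ∀ t : ℕ, ((t : ℝ) + 1) * γ ^ t * ε
        = ((t : ℝ) * γ ^ t + γ ^ t) * ε := fun t => by ring
    rw [tsum_congr heq, tsum_mul_right, Summable.tsum_add h1 hgeom,
      tsum_coe_mul_geometric_of_norm_lt_one
        (by rw [Real.norm_eq_abs, abs_of_pos hγ0]; exact hγ1),
      tsum_geometric_of_lt_one hγ0.le hγ1]
  calc (∑ s, ∑ a, |occupancy P μ₀ γ π s a - occupancy P μ₀ γ π' s a|)
      ≤ ∑ s, ∑ a, (1 - γ) * ∑' t, f s a t :=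
        Finset.sum_le_sum fun s _ => Finset.sum_le_sum fun a _ => hpoint s a
    _ = (1 - γ) * ∑ s, ∑ a, ∑' t, f s a t := by
        rw [Finset.mul_sum]
        exact Finset.sum_congr rfl fun s _ => by rw [Finset.mul_sum]
    _ = (1 - γ) * ∑' t, ∑ s, ∑ a, f s a t := by rw [hswap]
    _ = (1 - γ) * ∑' t, γ ^ t * B t := by
        rw [tsum_congr hfB]
    _ ≤ (1 - γ) * ((γ / (1 - γ) ^ 2 + (1 - γ)⁻¹) * ε) := by
        apply mul_le_mul_of_nonneg_left _ hγs.le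
        rw [← hRval]
        exact htsum_le
    _ = (1 / (1 - γ)) * ε := by
        have hne : (1 - γ) ≠ 0 := ne_of_gt hγs
        field_simp
        ring
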